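/- arXiv:1011.1690 — 3 statements merged into one kernel-verified Lean document; each statement's English description precedes it below -/
import Mathlib

section
/- Flows of holomorphic vector fields are holomorphic: Let U, U' ⊆ ℂ be open sets with U' ⊆ U, let X : U → ℂ be holomorphic, let ε > 0, and let φ : (−ε, ε) × U' → ℂ be a smooth map such that for all τ ∈ (−ε, ε) and z ∈ U' one has φ(τ, z) ∈ U, ∂φ/∂τ(τ, z) = X(φ(τ, z)), and φ(0, z) = z. Then for every τ ∈ (−ε, ε) the map z ↦ φ(τ, z) is holomorphic on U'. -/
open Set Complex

/-- Forward uniqueness for the scalar linear ODE `f' = c f` with `f a = 0`. -/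
lemma linODE_zero {c f : ℝ → ℂ} {a b : ℝ} (hab : a ≤ b)
    (hf : ∀ t ∈ Icc a b, HasDerivAt f (c t * f t) t)
    (hc : ContinuousOn c (Icc a b)) (h0 : f a = 0) : f b = 0 := by
  obtain ⟨K, hK⟩ := isCompact_Icc.exists_bound_of_continuousOn hc
  have cont : ContinuousOn f (Icc a b) := fun t ht =>
    (hf t ht).continuousAt.continuousWithinAt
  have hf' : ∀ t ∈ Ico a b, HasDerivWithinAt f (c t * f t) (Ici t) t := fun t ht =>
    (hf t (Ico_subset_Icc_self ht)).hasDerivWithinAt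
  have bound : ∀ t ∈ Ico a b, ‖c t * f t‖ ≤ K * ‖f t‖ + 0 := by
    intro t ht
    rw [norm_mul, add_zero]
    exact mul_le_mul_of_nonneg_right (hK t (Ico_subset_Icc_self ht)) (norm_nonneg _)
  have := norm_le_gronwallBound_of_norm_deriv_right_le (δ := 0) (K := K) (ε := 0)
    cont hf' (by simp [h0]) bound b (right_mem_Icc.2 hab)
  rw [gronwallBound_ε0_δ0] at this
  exact norm_le_zero_iff.1 this

/-- Backward uniqueness for the scalar linear ODE `f' = c f` with `f b = 0`. -/
lemma linODE_zero' {c f : ℝ → ℂ} {a b : ℝ} (hab : a ≤ b)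
    (hf : ∀ t ∈ Icc a b, HasDerivAt f (c t * f t) t)
    (hc : ContinuousOn c (Icc a b)) (h0 : f b = 0) : f a = 0 := by
  have hmap : ∀ t ∈ Icc a b, a + b - t ∈ Icc a b := by
    intro t ht
    simp only [mem_Icc] at ht ⊢
    constructor <;> linarith [ht.1, ht.2]
  have key : f (a + b - b) = 0 := by
    have := linODE_zero (c := fun t => -c (a + b - t)) (f := fun t => f (a + b - t)) hab
      ?_ ?_ (by simpa using h0)
    · simpa using this
    · intro t ht
      have h1 : HasDerivAt (fun t : ℝ => a + b - t) (-1) t := by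
        simpa using (hasDerivAt_id t).const_sub (a + b)
      have h2 := (hf _ (hmap t ht)).scomp t h1
      convert h2 using 1
      all_goals first | rfl | simp
    · exact ((hc.comp (by fun_prop) hmap)).neg
  simpa using key

/-- **Flows of holomorphic vector fields are holomorphic.**  Let `U' ⊆ U ⊆ ℂ` be open,
`X : U → ℂ` holomorphic, `ε > 0`, and `φ : (−ε, ε) × U' → ℂ` a smooth map with
`φ(τ, z) ∈ U`, `∂φ/∂τ(τ, z) = X(φ(τ, z))` and `φ(0, z) = z`.  Then each map
`z ↦ φ(τ, z)` is holomorphic on `U'`. -/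
theorem flow_of_holomorphic_vector_field_is_holomorphic
    (U U' : Set ℂ) (hU : IsOpen U) (hU' : IsOpen U') (hsub : U' ⊆ U)
    (X : ℂ → ℂ) (hX : DifferentiableOn ℂ X U)
    (ε : ℝ) (hε : 0 < ε)
    (φ : ℝ × ℂ → ℂ)
    (hφsmooth : ContDiffOn ℝ (⊤ : ℕ∞) φ ((Ioo (-ε) ε) ×ˢ U'))
    (hmem : ∀ τ ∈ Ioo (-ε) ε, ∀ z ∈ U', φ (τ, z) ∈ U)
    (hode : ∀ τ ∈ Ioo (-ε) ε, ∀ z ∈ U',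
      HasDerivAt (fun t : ℝ => φ (t, z)) (X (φ (τ, z))) τ)
    (hinit : ∀ z ∈ U', φ (0, z) = z) :
    ∀ τ ∈ Ioo (-ε) ε, DifferentiableOn ℂ (fun z => φ (τ, z)) U' := by
  intro τ₀ hτ₀ z₀ hz₀
  have hΩ : IsOpen ((Ioo (-ε) ε) ×ˢ U') := isOpen_Ioo.prod hU'
  set Ω : Set (ℝ × ℂ) := (Ioo (-ε) ε) ×ˢ U' with hΩdef
  -- smoothness at points of `Ω`
  have hCD : ∀ p ∈ Ω, ContDiffAt ℝ (⊤ : ℕ∞) φ p := fun p hp =>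
    hφsmooth.contDiffAt (hΩ.mem_nhds hp)
  set Dφ : ℝ × ℂ → (ℝ × ℂ →L[ℝ] ℂ) := fderiv ℝ φ with hDφdef
  have hdiff : ∀ p ∈ Ω, HasFDerivAt φ (Dφ p) p := fun p hp =>
    ((hCD p hp).differentiableAt (by simp)).hasFDerivAt
  have hDφCD : ∀ p ∈ Ω, ContDiffAt ℝ (⊤ : ℕ∞) Dφ p := fun p hp =>
    (hCD p hp).fderiv_right (m := (⊤ : ℕ∞)) (by exact_mod_cast le_top)
  have hDφdiff : ∀ p ∈ Ω, HasFDerivAt Dφ (fderiv ℝ Dφ p) p := fun p hp =>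
    ((hDφCD p hp).differentiableAt (by simp)).hasFDerivAt
  have hsymm : ∀ p ∈ Ω, IsSymmSndFDerivAt ℝ φ p := by
    intro p hp
    exact (hCD p hp).isSymmSndFDerivAt (by simp; exact WithTop.coe_le_coe.2 (le_top : (2:ℕ∞) ≤ ⊤))
  -- the time derivative of `φ` equals `X ∘ φ`
  have hG : ∀ p ∈ Ω, Dφ p ((1 : ℝ), (0 : ℂ)) = X (φ p) := by
    intro p hp
    have hcurve : HasDerivAt (fun t : ℝ => ((t, p.2) : ℝ × ℂ)) ((1 : ℝ), (0 : ℂ)) p.1 :=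
      (hasDerivAt_id p.1).prodMk (hasDerivAt_const p.1 p.2)
    have h1 : HasDerivAt (fun t : ℝ => φ (t, p.2)) (Dφ p ((1 : ℝ), (0 : ℂ))) p.1 := by
      exact (hdiff p hp).comp_hasDerivAt p.1 hcurve
    exact h1.unique (hode p.1 hp.1 p.2 hp.2)
  -- the `z`-partial derivative satisfies a linear ODE in `t`
  have hODEdir : ∀ w : ℂ, ∀ τ ∈ Ioo (-ε) ε,
      HasDerivAt (fun t : ℝ => Dφ (t, z₀) ((0 : ℝ), w))
        (deriv X (φ (τ, z₀)) * Dφ (τ, z₀) ((0 : ℝ), w)) τ := by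
    intro w τ hτ
    have hp : ((τ, z₀) : ℝ × ℂ) ∈ Ω := ⟨hτ, hz₀⟩
    set p : ℝ × ℂ := (τ, z₀) with hpdef
    have hcurve : HasDerivAt (fun t : ℝ => ((t, z₀) : ℝ × ℂ)) ((1 : ℝ), (0 : ℂ)) τ :=
      (hasDerivAt_id τ).prodMk (hasDerivAt_const τ z₀)
    have hD : HasDerivAt (fun t : ℝ => Dφ (t, z₀)) (fderiv ℝ Dφ p ((1 : ℝ), (0 : ℂ))) τ := by
      exact (hDφdiff p hp).comp_hasDerivAt τ hcurve
    have happ : HasDerivAt (fun t : ℝ => Dφ (t, z₀) ((0 : ℝ), w))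
        (fderiv ℝ Dφ p ((1 : ℝ), (0 : ℂ)) ((0 : ℝ), w)) τ := by
      simpa using hD.clm_apply (hasDerivAt_const τ (((0 : ℝ), w) : ℝ × ℂ))
    -- compute the second derivative term using symmetry and the ODE
    have hXd : DifferentiableAt ℂ X (φ p) :=
      hX.differentiableAt (hU.mem_nhds (hmem τ hτ z₀ hz₀))
    have hXder : HasFDerivAt X (ContinuousLinearMap.smulRight (1 : ℂ →L[ℂ] ℂ)
        (deriv X (φ p))) (φ p) := hXd.hasDerivAt.hasFDerivAt
    have hcomp : HasFDerivAt (fun q : ℝ × ℂ => X (φ q))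
        (((ContinuousLinearMap.smulRight (1 : ℂ →L[ℂ] ℂ)
          (deriv X (φ p))).restrictScalars ℝ).comp (Dφ p)) p :=
      (hXder.restrictScalars ℝ).comp p (hdiff p hp)
    have hGev : (fun q : ℝ × ℂ => Dφ q ((1 : ℝ), (0 : ℂ))) =ᶠ[nhds p]
        (fun q : ℝ × ℂ => X (φ q)) := by
      filter_upwards [hΩ.mem_nhds hp] with q hq using hG q hq
    have hGder : HasFDerivAt (fun q : ℝ × ℂ => Dφ q ((1 : ℝ), (0 : ℂ)))
        ((ContinuousLinearMap.apply ℝ ℂ (((1 : ℝ), (0 : ℂ)) : ℝ × ℂ)).comp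
          (fderiv ℝ Dφ p)) p :=
      (ContinuousLinearMap.apply ℝ ℂ (((1 : ℝ), (0 : ℂ)) : ℝ × ℂ)).hasFDerivAt.comp p
        (hDφdiff p hp)
    have huniq := (hcomp.congr_of_eventuallyEq hGev).unique hGder
    have hkey : fderiv ℝ Dφ p ((0 : ℝ), w) ((1 : ℝ), (0 : ℂ))
        = deriv X (φ p) * Dφ p ((0 : ℝ), w) := by
      have := congrFun (congrArg DFunLike.coe huniq) (((0 : ℝ), w) : ℝ × ℂ)
      simpa [mul_comm, smul_eq_mul] using this.symm
    have hsym := hsymm p hp (((1 : ℝ), (0 : ℂ)) : ℝ × ℂ) (((0 : ℝ), w) : ℝ × ℂ)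
    rw [show fderiv ℝ (fderiv ℝ φ) p = fderiv ℝ Dφ p from rfl] at hsym
    rw [show fderiv ℝ Dφ p ((1 : ℝ), (0 : ℂ)) ((0 : ℝ), w)
        = deriv X (φ p) * Dφ p ((0 : ℝ), w) from hsym.trans hkey] at happ
    exact happ
  -- initial condition for the partial derivative
  have hinitD : ∀ w : ℂ, Dφ ((0 : ℝ), z₀) ((0 : ℝ), w) = w := by
    intro w
    have hp₀ : (((0 : ℝ), z₀) : ℝ × ℂ) ∈ Ω := ⟨⟨(by linarith : -ε < (0:ℝ)), hε⟩, hz₀⟩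
    have hL : HasFDerivAt (fun z : ℂ => φ (0, z))
        ((Dφ ((0 : ℝ), z₀)).comp (ContinuousLinearMap.inr ℝ ℝ ℂ)) z₀ :=
      (hdiff _ hp₀).comp z₀ (hasFDerivAt_prodMk_right (0 : ℝ) z₀)
    have hev : (fun z : ℂ => φ (0, z)) =ᶠ[nhds z₀] id := by
      filter_upwards [hU'.mem_nhds hz₀] with z hz using hinit z hz
    have hid : HasFDerivAt (fun z : ℂ => φ (0, z)) (ContinuousLinearMap.id ℝ ℂ) z₀ :=
      (hasFDerivAt_id z₀).congr_of_eventuallyEq hev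
    have := hL.unique hid
    have := congrFun (congrArg DFunLike.coe this) w
    simpa using this
  -- the antiholomorphic defect
  set c : ℝ → ℂ := fun t => deriv X (φ (t, z₀)) with hcdef
  set ψ : ℝ → ℂ := fun t => Dφ (t, z₀) ((0 : ℝ), I) - I * Dφ (t, z₀) ((0 : ℝ), 1) with hψdef
  have hψode : ∀ τ ∈ Ioo (-ε) ε, HasDerivAt ψ (c τ * ψ τ) τ := by
    intro τ hτ
    have h1 := hODEdir I τ hτ
    have h2 := (hODEdir 1 τ hτ).const_mul I
    have := h1.sub h2
    convert this using 1
    all_goals try rfl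
    simp only [hψdef, hcdef]
    ring
  have hψ0 : ψ 0 = 0 := by
    simp [hψdef, hinitD I, hinitD 1]
  -- continuity of the coefficient
  have hccont : ∀ t ∈ Ioo (-ε) ε, ContinuousAt c t := by
    intro t ht
    have h1 : ContinuousAt (fun t : ℝ => φ (t, z₀)) t := (hode t ht z₀ hz₀).continuousAt
    have h2 : ContinuousAt (deriv X) (φ (t, z₀)) := by
      have : AnalyticOnNhd ℂ (deriv X) U := (hX.analyticOnNhd hU).deriv
      exact (this _ (hmem t ht z₀ hz₀)).continuousAt
    exact ContinuousAt.comp (x := t) h2 h1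
  -- Gronwall: the defect vanishes at `τ₀`
  have hψτ₀ : ψ τ₀ = 0 := by
    rcases le_total 0 τ₀ with h | h
    · have hsubI : Icc (0 : ℝ) τ₀ ⊆ Ioo (-ε) ε := by
        intro t ht
        exact ⟨by linarith [ht.1], lt_of_le_of_lt ht.2 hτ₀.2⟩
      exact linODE_zero h (fun t ht => hψode t (hsubI ht))
        (fun t ht => (hccont t (hsubI ht)).continuousWithinAt) hψ0
    · have hsubI : Icc τ₀ (0 : ℝ) ⊆ Ioo (-ε) ε := by
        intro t ht
        exact ⟨lt_of_lt_of_le hτ₀.1 ht.1, by linarith [ht.2]⟩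
      exact linODE_zero' h (fun t ht => hψode t (hsubI ht))
        (fun t ht => (hccont t (hsubI ht)).continuousWithinAt) hψ0
  -- conclude complex differentiability at `z₀`
  have hp : ((τ₀, z₀) : ℝ × ℂ) ∈ Ω := ⟨hτ₀, hz₀⟩
  have hL : HasFDerivAt (fun z : ℂ => φ (τ₀, z))
      ((Dφ ((τ₀ : ℝ), z₀)).comp (ContinuousLinearMap.inr ℝ ℝ ℂ)) z₀ :=
    (hdiff _ hp).comp z₀ (hasFDerivAt_prodMk_right τ₀ z₀)
  set m : ℂ := Dφ (τ₀, z₀) ((0 : ℝ), 1) with hmdef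
  have hI : Dφ (τ₀, z₀) ((0 : ℝ), I) = I * m := by
    have := hψτ₀
    simp only [hψdef, sub_eq_zero] at this
    exact this
  have key : ∀ w : ℂ, ((Dφ ((τ₀ : ℝ), z₀)).comp (ContinuousLinearMap.inr ℝ ℝ ℂ)) w
      = m * w := by
    intro w
    have hw : w = w.re • (1 : ℂ) + w.im • I := by
      simp [Complex.real_smul, Complex.re_add_im]
    rw [hw, map_add, map_smul, map_smul]
    simp only [ContinuousLinearMap.comp_apply, ContinuousLinearMap.inr_apply]
    rw [hI]
    simp only [← hmdef, Complex.real_smul]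
    ring
  have hM : HasFDerivAt (fun z : ℂ => φ (τ₀, z))
      (ContinuousLinearMap.smulRight (1 : ℂ →L[ℂ] ℂ) m) z₀ := by
    apply hasFDerivAt_of_restrictScalars ℝ hL
    ext w
    simp [key w, mul_comm]
  exact hM.differentiableAt.differentiableWithinAt
end

section
/- Existence and contractibility of compatible complex structures on a symplectic vector space: Let V be a finite-dimensional real vector space and ω a nondegenerate alternating bilinear form on V. Let 𝒥(V,ω) denote the set of linear maps J : V → V with J ∘ J = −id such that the bilinear form g_J(v,w) := ω(v, Jw) is symmetric and positive definite, topologized as a subspace of the space of linear endomorphisms of V. Then 𝒥(V,ω) is nonempty and contractible. -/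
open scoped RealInnerProductSpace
open Polynomial

set_option linter.unusedSectionVars false
set_option maxHeartbeats 1000000

noncomputable section

variable {E : Type*} [NormedAddCommGroup E] [InnerProductSpace ℝ E] [FiniteDimensional ℝ E]

def ccsSet {V : Type*} [NormedAddCommGroup V] [NormedSpace ℝ V] (Ω : V → V → ℝ) :
    Set (V →L[ℝ] V) :=
  {J | (∀ v, J (J v) = -v) ∧ (∀ v w, Ω v (J w) = Ω w (J v)) ∧ (∀ v, v ≠ 0 → 0 < Ω v (J v))}

lemma ccs_skew {B : E →L[ℝ] E} (h : ∀ v, ⟪B v, v⟫ = 0) (v w : E) :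
    ⟪B v, w⟫ = -⟪v, B w⟫ := by
  have h2 := h (v + w)
  simp only [map_add, inner_add_left, inner_add_right, h] at h2
  have h3 : ⟪B v, w⟫ + ⟪B w, v⟫ = 0 := by linarith
  have h4 : ⟪v, B w⟫ = ⟪B w, v⟫ := real_inner_comm (B w) v
  linarith

lemma ccs_isUnit {B : E →L[ℝ] E} (h : ∀ v, v ≠ 0 → 0 < ⟪B v, v⟫) : IsUnit B := by
  have hinj : Function.Injective B := by
    rw [injective_iff_map_eq_zero]
    intro v hv
    by_contra hv0
    have := h v hv0
    rw [hv] at this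
    simp at this
  have hbij : Function.Bijective (B : E →ₗ[ℝ] E) :=
    ⟨hinj, (LinearMap.injective_iff_surjective).mp hinj⟩
  let e : E ≃ₗ[ℝ] E := LinearEquiv.ofBijective (B : E →ₗ[ℝ] E) hbij
  let e' : E ≃L[ℝ] E := e.toContinuousLinearEquiv
  refine ⟨⟨B, (e'.symm : E →L[ℝ] E), ?_, ?_⟩, rfl⟩
  · ext v
    show B (e'.symm v) = v
    exact e'.apply_symm_apply v
  · ext v
    show e'.symm (B v) = v
    exact e'.symm_apply_apply v

lemma ccs_contract {S : E →L[ℝ] E} (hsym : ∀ v w, ⟪S v, w⟫ = ⟪v, S w⟫)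
    (h₁ : ∀ v, v ≠ 0 → 0 < ⟪v + S v, v⟫) (h₂ : ∀ v, v ≠ 0 → 0 < ⟪v - S v, v⟫)
    (x : E) (hx : x ≠ 0) : ⟪S x, S x⟫ < ⟪x, x⟫ := by
  set t := S x with ht
  have hu : x + t ≠ 0 := by
    intro h0
    have := h₁ x hx
    rw [← ht, h0] at this
    simp at this
  have hv : x - t ≠ 0 := by
    intro h0
    have := h₂ x hx
    rw [← ht, h0] at this
    simp at this
  have hA := h₂ (x + t) hu
  have hB := h₁ (x - t) hv
  have hSt : ⟪S t, x⟫ = ⟪t, t⟫ := by rw [hsym t x, ← ht]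
  have hxt : ⟪x, t⟫ = ⟪t, x⟫ := real_inner_comm t x
  have hxSt : ⟪x, S t⟫ = ⟪t, t⟫ := by rw [← hsym x t, ← ht]
  simp only [map_add, map_sub, inner_add_left, inner_add_right, inner_sub_left,
    inner_sub_right, ← ht] at hA hB
  linarith

lemma ccs_ring_inverse_eq {A : Type*} [Ring A] (a b : A) (h1 : a * b = 1) (h2 : b * a = 1) :
    Ring.inverse a = b :=
  Ring.inverse_unit (⟨a, b, h1, h2⟩ : Aˣ)

lemma ccs_comm_inverse {A : Type*} [Ring A] {u x : A} (hu : IsUnit u) (h : x * u = u * x) :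
    x * Ring.inverse u = Ring.inverse u * x := by
  have hc1 := Ring.mul_inverse_cancel u hu
  have hc2 := Ring.inverse_mul_cancel u hu
  calc x * Ring.inverse u
      = Ring.inverse u * u * x * Ring.inverse u := by rw [hc2, one_mul]
    _ = Ring.inverse u * (x * u) * Ring.inverse u := by rw [mul_assoc (Ring.inverse u) u x, ← h]
    _ = Ring.inverse u * x * (u * Ring.inverse u) := by simp only [mul_assoc]
    _ = Ring.inverse u * x := by rw [hc1, mul_one]

lemma ccs_inv_apply_left {B : E →L[ℝ] E} (hB : IsUnit B) (v : E) :
    B (Ring.inverse B v) = v := by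
  simpa [ContinuousLinearMap.mul_apply] using
    DFunLike.congr_fun (Ring.mul_inverse_cancel B hB) v

lemma ccs_inv_apply_right {B : E →L[ℝ] E} (hB : IsUnit B) (v : E) :
    Ring.inverse B (B v) = v := by
  simpa [ContinuousLinearMap.mul_apply] using
    DFunLike.congr_fun (Ring.inverse_mul_cancel B hB) v

lemma ccs_inv_symm {B : E →L[ℝ] E} (hB : IsUnit B) (hsym : ∀ v w, ⟪B v, w⟫ = ⟪v, B w⟫)
    (v w : E) : ⟪Ring.inverse B v, w⟫ = ⟪v, Ring.inverse B w⟫ := by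
  conv_lhs => rw [← ccs_inv_apply_left hB w]
  rw [← hsym (Ring.inverse B v) (Ring.inverse B w), ccs_inv_apply_left hB v]



lemma ccs_diag_inner {n : ℕ} (b : OrthonormalBasis (Fin n) ℝ E) (B : E →L[ℝ] E)
    (d : Fin n → ℝ) (hB : ∀ i, B (b i) = d i • b i) (x y : E) :
    ⟪B x, y⟫ = ∑ i, d i * (⟪b i, x⟫ * ⟪b i, y⟫) := by
  conv_lhs => rw [← b.sum_repr' x]
  rw [map_sum, sum_inner]
  refine Finset.sum_congr rfl fun i _ => ?_
  rw [map_smul, hB i, real_inner_smul_left, real_inner_smul_left]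
  ring

lemma ccs_diag_symm {n : ℕ} (b : OrthonormalBasis (Fin n) ℝ E) (B : E →L[ℝ] E)
    (d : Fin n → ℝ) (hB : ∀ i, B (b i) = d i • b i) (v w : E) :
    ⟪B v, w⟫ = ⟪v, B w⟫ := by
  rw [ccs_diag_inner b B d hB v w, ← real_inner_comm v (B w), ccs_diag_inner b B d hB w v]
  exact Finset.sum_congr rfl fun i _ => by ring

lemma ccs_diag_pos {n : ℕ} (b : OrthonormalBasis (Fin n) ℝ E) (B : E →L[ℝ] E)
    (d : Fin n → ℝ) (hB : ∀ i, B (b i) = d i • b i) (hd : ∀ i, 0 < d i)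
    (v : E) (hv : v ≠ 0) : 0 < ⟪B v, v⟫ := by
  rw [ccs_diag_inner b B d hB v v]
  have hex : ∃ i, ⟪b i, v⟫ ≠ 0 := by
    by_contra hall
    push_neg at hall
    apply hv
    rw [← b.sum_repr' v]
    refine Finset.sum_eq_zero fun i _ => ?_
    rw [hall i, zero_smul]
  obtain ⟨i, hi⟩ := hex
  refine Finset.sum_pos' (fun j _ => mul_nonneg (le_of_lt (hd j)) (mul_self_nonneg _))
    ⟨i, Finset.mem_univ i, mul_pos (hd i) (mul_self_pos.mpr hi)⟩

lemma ccs_aeval_eig (P : E →L[ℝ] E) (q : ℝ[X]) (x : E) (μ : ℝ) (hx : P x = μ • x) :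
    (aeval P q) x = q.eval μ • x := by
  have hpow : ∀ k : ℕ, (P ^ k) x = μ ^ k • x := by
    intro k
    induction k with
    | zero => simp
    | succ k ih =>
      rw [pow_succ, pow_succ, ContinuousLinearMap.mul_apply, hx, map_smul, ih, smul_smul,
        mul_comm]
  induction q using Polynomial.induction_on' with
  | add p q hp hq => rw [map_add, eval_add, ContinuousLinearMap.add_apply, hp, hq, add_smul]
  | monomial k a =>
    rw [aeval_monomial, eval_monomial, ContinuousLinearMap.mul_apply, hpow,
      Algebra.algebraMap_eq_smul_one, ContinuousLinearMap.smul_apply,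
      ContinuousLinearMap.one_apply, smul_smul]

lemma ccs_commute_aeval (A P : E →L[ℝ] E) (h : Commute A P) (q : ℝ[X]) :
    Commute A (aeval P q) := by
  induction q using Polynomial.induction_on' with
  | add p q hp hq => rw [map_add]; exact hp.add_right hq
  | monomial k a =>
    rw [aeval_monomial]
    have h1 : Commute A (algebraMap ℝ (E →L[ℝ] E) a) := Commute.symm (Algebra.commutes a A)
    exact h1.mul_right (h.pow_right k)

lemma ccs_self_pos {x : E} (hx : x ≠ 0) : (0:ℝ) < ⟪x, x⟫ :=
  lt_of_le_of_ne real_inner_self_nonneg (Ne.symm ((@inner_self_ne_zero ℝ _ _ _ _ x).mpr hx))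

set_option synthInstance.maxHeartbeats 1000000 in
lemma ccs_main (J₀ : E →L[ℝ] E) (hJ₀ : ∀ v, J₀ (J₀ v) = -v) (halt : ∀ v, ⟪J₀ v, v⟫ = 0) :
    (ccsSet fun v w => (⟪J₀ v, w⟫ : ℝ)).Nonempty ∧
      ContractibleSpace (ccsSet fun v w => (⟪J₀ v, w⟫ : ℝ)) := by
  classical
  have hskew : ∀ v w : E, ⟪J₀ v, w⟫ = -⟪v, J₀ w⟫ := ccs_skew halt
  have hJ₀sq : J₀ * J₀ = -1 := by
    ext v
    simp [ContinuousLinearMap.mul_apply, hJ₀]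
  have hJJinner : ∀ a b : E, ⟪J₀ a, J₀ b⟫ = ⟪a, b⟫ := by
    intro a b
    rw [hskew a (J₀ b), hJ₀ b, inner_neg_right, neg_neg]
  have hJ₀inj : Function.Injective J₀ := by
    intro a b hab
    have : J₀ (J₀ a) = J₀ (J₀ b) := by rw [hab]
    rw [hJ₀, hJ₀, neg_inj] at this
    exact this
  have hJ₀mem : J₀ ∈ ccsSet (fun v w => (⟪J₀ v, w⟫ : ℝ)) := by
    refine ⟨hJ₀, fun v w => ?_, fun v hv => ?_⟩
    · show (⟪J₀ v, J₀ w⟫ : ℝ) = ⟪J₀ w, J₀ v⟫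
      rw [hJJinner v w, hJJinner w v, real_inner_comm]
    · show (0:ℝ) < ⟪J₀ v, J₀ v⟫
      rw [hJJinner v v]
      exact ccs_self_pos hv
  set Sset : Set (E →L[ℝ] E) := {S | (∀ v w, ⟪S v, w⟫ = ⟪v, S w⟫) ∧
      (∀ v, S (J₀ v) = -J₀ (S v)) ∧
      (∀ v, v ≠ 0 → 0 < ⟪v + S v, v⟫) ∧ (∀ v, v ≠ 0 → 0 < ⟪v - S v, v⟫)} with hSset
  have hconv : Convex ℝ Sset := by
    intro S₁ hS₁ S₂ hS₂ a b ha hb hab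
    obtain ⟨h1s, h1a, h1p, h1m⟩ := hS₁
    obtain ⟨h2s, h2a, h2p, h2m⟩ := hS₂
    have happ : ∀ v : E, (a • S₁ + b • S₂) v = a • S₁ v + b • S₂ v := by
      intro v
      simp
    have hcomb : ∀ x y : ℝ, 0 < x → 0 < y → 0 < a * x + b * y := by
      intro x y hx hy
      rcases eq_or_lt_of_le ha with h | h
      · have hb1 : b = 1 := by linarith
        rw [← h, hb1]; simpa using hy
      · rcases eq_or_lt_of_le hb with h' | h'
        · have ha1 : a = 1 := by linarith
          rw [← h', ha1]; simpa using hx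
        · positivity
    refine ⟨fun v w => ?_, fun v => ?_, fun v hv => ?_, fun v hv => ?_⟩
    · rw [happ v, happ w]
      simp only [inner_add_left, inner_add_right, real_inner_smul_left, real_inner_smul_right]
      rw [h1s v w, h2s v w]
    · rw [happ (J₀ v), happ v, h1a v, h2a v]
      simp only [smul_neg, map_add, map_smul, neg_add]
      try abel
    · rw [happ v]
      calc (0:ℝ) < a * ⟪v + S₁ v, v⟫ + b * ⟪v + S₂ v, v⟫ := hcomb _ _ (h1p v hv) (h2p v hv)
        _ = ⟪v + (a • S₁ v + b • S₂ v), v⟫ := by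
            simp only [inner_add_left, real_inner_smul_left]
            linear_combination (inner ℝ v v : ℝ) * hab
    · rw [happ v]
      calc (0:ℝ) < a * ⟪v - S₁ v, v⟫ + b * ⟪v - S₂ v, v⟫ := hcomb _ _ (h1m v hv) (h2m v hv)
        _ = ⟪v - (a • S₁ v + b • S₂ v), v⟫ := by
            simp only [inner_sub_left, inner_add_left, real_inner_smul_left]
            linear_combination (inner ℝ v v : ℝ) * hab
  have hSne : (0 : E →L[ℝ] E) ∈ Sset := by
    refine ⟨fun v w => by simp, fun v => by simp, fun v hv => ?_, fun v hv => ?_⟩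
    · simpa using ccs_self_pos hv
    · simpa using ccs_self_pos hv
  set φ : (E →L[ℝ] E) → (E →L[ℝ] E) :=
    fun J => (1 + J₀ * J) * Ring.inverse (1 - J₀ * J) with hφ
  set ψ : (E →L[ℝ] E) → (E →L[ℝ] E) :=
    fun S => J₀ * ((1 - S) * Ring.inverse (1 + S)) with hψ
  have hunit : ∀ J ∈ ccsSet (fun v w => (⟪J₀ v, w⟫ : ℝ)), IsUnit (1 - J₀ * J) := by
    intro J hJ
    obtain ⟨hJsq', hsymm, hpos⟩ := hJ
    refine ccs_isUnit fun v hv => ?_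
    have hTneg : ⟪(J₀ * J) v, v⟫ < 0 := by
      have h1 : ⟪J₀ (J v), v⟫ = -⟪J v, J₀ v⟫ := hskew _ _
      have h2 : ⟪J₀ v, J v⟫ = ⟪J v, J₀ v⟫ := real_inner_comm (J v) (J₀ v)
      have h3 := hpos v hv
      rw [ContinuousLinearMap.mul_apply, h1]
      simp only at h3
      linarith
    have h4 : (0:ℝ) < ⟪v, v⟫ := ccs_self_pos hv
    rw [ContinuousLinearMap.sub_apply, ContinuousLinearMap.one_apply, inner_sub_left]
    linarith
  have hφmem : ∀ J ∈ ccsSet (fun v w => (⟪J₀ v, w⟫ : ℝ)), φ J ∈ Sset ∧ ψ (φ J) = J := by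
    intro J hJ
    have hu := hunit J hJ
    obtain ⟨hJsq', hsymm, hpos⟩ := hJ
    simp only at hsymm hpos
    have hJsq : J * J = -1 := by
      ext v
      simp [ContinuousLinearMap.mul_apply, hJsq']
    set T : E →L[ℝ] E := J₀ * J with hT
    set c : E →L[ℝ] E := Ring.inverse (1 - T) with hc
    have hc1 : (1 - T) * c = 1 := Ring.mul_inverse_cancel _ hu
    have hc2 : c * (1 - T) = 1 := Ring.inverse_mul_cancel _ hu
    have hc1' : ∀ v, (1 - T) (c v) = v := fun v => ccs_inv_apply_left hu v
    have hc2' : ∀ v, c ((1 - T) v) = v := fun v => ccs_inv_apply_right hu v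
    have hcne : ∀ v, v ≠ 0 → c v ≠ 0 := fun v hv h0 => hv (by rw [← hc1' v, h0, map_zero])
    have hTapp : ∀ v, T v = J₀ (J v) := fun v => rfl
    have hTsym : ∀ v w, ⟪T v, w⟫ = ⟪v, T w⟫ := by
      intro v w
      calc ⟪T v, w⟫ = -⟪J v, J₀ w⟫ := by rw [hTapp]; exact hskew (J v) w
        _ = -⟪J₀ w, J v⟫ := by rw [real_inner_comm (J₀ w) (J v)]
        _ = -⟪J₀ v, J w⟫ := by rw [hsymm w v]
        _ = ⟪v, J₀ (J w)⟫ := by rw [hskew v (J w), neg_neg]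
        _ = ⟪v, T w⟫ := by rw [hTapp]
    have hTneg : ∀ v, v ≠ 0 → ⟪T v, v⟫ < 0 := by
      intro v hv
      have h1 : ⟪J₀ (J v), v⟫ = -⟪J v, J₀ v⟫ := hskew _ _
      have h2 : ⟪J₀ v, J v⟫ = ⟪J v, J₀ v⟫ := real_inner_comm (J v) (J₀ v)
      have h3 := hpos v hv
      rw [hTapp, h1]
      linarith
    have h1mTsym : ∀ v w, ⟪(1 - T) v, w⟫ = ⟪v, (1 - T) w⟫ := by
      intro v w
      simp only [ContinuousLinearMap.sub_apply, ContinuousLinearMap.one_apply,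
        inner_sub_left, inner_sub_right]
      rw [hTsym v w]
    have h1pTsym : ∀ v w, ⟪(1 + T) v, w⟫ = ⟪v, (1 + T) w⟫ := by
      intro v w
      simp only [ContinuousLinearMap.add_apply, ContinuousLinearMap.one_apply,
        inner_add_left, inner_add_right]
      rw [hTsym v w]
    have hcsym : ∀ v w, ⟪c v, w⟫ = ⟪v, c w⟫ := fun v w => ccs_inv_symm hu h1mTsym v w
    have hTJT : T * (J₀ * T) = J₀ := by
      ext v
      simp only [ContinuousLinearMap.mul_apply, hT]
      rw [hJ₀ (J v)]
      rw [map_neg, hJsq', neg_neg]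
    have hi : (1 - T) * (J₀ * T) = -(J₀ * (1 - T)) := by
      rw [sub_mul, one_mul, hTJT, mul_sub, mul_one, neg_sub]
    have hii : (1 + T) * (J₀ * T) = J₀ * (1 + T) := by
      rw [add_mul, one_mul, hTJT, mul_add, mul_one, add_comm]
    have hiii : c * J₀ = -((J₀ * T) * c) := by
      have e1 : c * ((1 - T) * (J₀ * T)) * c = (J₀ * T) * c := by
        calc c * ((1 - T) * (J₀ * T)) * c = (c * (1 - T)) * ((J₀ * T) * c) := by
              simp only [mul_assoc]
          _ = (J₀ * T) * c := by rw [hc2, one_mul]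
      have e2 : c * (-(J₀ * (1 - T))) * c = -(c * J₀) := by
        calc c * (-(J₀ * (1 - T))) * c = -((c * J₀) * ((1 - T) * c)) := by
              simp only [mul_neg, neg_mul, mul_assoc]
          _ = -(c * J₀) := by rw [hc1, mul_one]
      have e3 := congrArg (fun X => c * X * c) hi
      try simp only at e3
      rw [e1, e2] at e3
      rw [e3, neg_neg]
    set S : E →L[ℝ] E := (1 + T) * c with hS
    have hSwap : (1 + T) * c = c * (1 + T) := ccs_comm_inverse hu (by noncomm_ring)
    have hSapp : ∀ v, S v = c v + T (c v) := by
      intro v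
      simp [hS, ContinuousLinearMap.mul_apply, ContinuousLinearMap.add_apply,
        ContinuousLinearMap.one_apply]
    have hvdec : ∀ v, v = c v - T (c v) := by
      intro v
      have := hc1' v
      simp only [ContinuousLinearMap.sub_apply, ContinuousLinearMap.one_apply] at this
      exact this.symm
    have hcpos : ∀ v, v ≠ 0 → 0 < ⟪c v, v⟫ := by
      intro v hv
      have hx := hcne v hv
      have h1 : ⟪c v, v⟫ = ⟪c v, c v⟫ - ⟪c v, T (c v)⟫ := by
        nth_rewrite 2 [hvdec v]
        rw [inner_sub_right]
      have h2 : ⟪c v, T (c v)⟫ = ⟪T (c v), c v⟫ := real_inner_comm (T (c v)) (c v)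
      have h3 := hTneg (c v) hx
      have h4 := ccs_self_pos hx
      linarith
    have hmem : S ∈ Sset := by
      refine ⟨fun v w => ?_, ?_, fun v hv => ?_, fun v hv => ?_⟩
      · have e4 : S w = c ((1 + T) w) := by
          show ((1 + T) * c) w = c ((1 + T) w)
          rw [hSwap]
          rfl
        calc ⟪S v, w⟫ = ⟪(1 + T) (c v), w⟫ := rfl
          _ = ⟪c v, (1 + T) w⟫ := h1pTsym _ _
          _ = ⟪v, c ((1 + T) w)⟫ := hcsym _ _
          _ = ⟪v, S w⟫ := by rw [← e4]
      · have hSJ : S * J₀ = -(J₀ * S) := by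
          calc S * J₀ = (1 + T) * (c * J₀) := by rw [hS, mul_assoc]
            _ = (1 + T) * (-((J₀ * T) * c)) := by rw [hiii]
            _ = -(((1 + T) * (J₀ * T)) * c) := by simp only [mul_neg, mul_assoc]
            _ = -((J₀ * (1 + T)) * c) := by rw [hii]
            _ = -(J₀ * S) := by rw [hS, mul_assoc]
        intro v
        have := DFunLike.congr_fun hSJ v
        simpa [ContinuousLinearMap.mul_apply, ContinuousLinearMap.neg_apply] using this
      · have e5 : v + S v = c v + c v := by
          rw [hSapp v]
          nth_rewrite 1 [hvdec v]
          abel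
        rw [e5, inner_add_left]
        have := hcpos v hv
        linarith
      · have e6 : v - S v = -(T (c v) + T (c v)) := by
          rw [hSapp v]
          nth_rewrite 1 [hvdec v]
          abel
        rw [e6, inner_neg_left, inner_add_left]
        have hx := hcne v hv
        have h1 : ⟪T (c v), v⟫ = ⟪T (c v), c v⟫ - ⟪T (c v), T (c v)⟫ := by
          nth_rewrite 2 [hvdec v]
          rw [inner_sub_right]
        have h2 := hTneg (c v) hx
        have h3 : (0:ℝ) ≤ ⟪T (c v), T (c v)⟫ := real_inner_self_nonneg
        linarith
    have hround : ψ S = J := by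
      have h1pS : (1 : E →L[ℝ] E) + S = (2:ℝ) • c := by
        have e1 : ((1 - T) + (1 + T)) * c = 1 + S := by rw [add_mul, hc1, hS]
        have e2 : (1 - T) + (1 + T) = (2:ℝ) • (1 : E →L[ℝ] E) := by
          rw [two_smul]; abel
        rw [← e1, e2, smul_mul_assoc, one_mul]
      have h1mS : (1 : E →L[ℝ] E) - S = (-2:ℝ) • (T * c) := by
        have e1 : ((1 - T) - (1 + T)) * c = 1 - S := by rw [sub_mul, hc1, hS]
        have e2 : (1 - T) - (1 + T) = (-2:ℝ) • T := by
          have : (-2:ℝ) • T = -((2:ℝ) • T) := by rw [neg_smul]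
          rw [this, two_smul]; abel
        rw [← e1, e2, smul_mul_assoc]
      have hSinv : Ring.inverse (1 + S) = (2⁻¹:ℝ) • (1 - T) := by
        apply ccs_ring_inverse_eq
        · rw [h1pS, smul_mul_smul_comm, hc2]
          norm_num
        · rw [h1pS, smul_mul_smul_comm, hc1]
          norm_num
      calc ψ S = J₀ * ((1 - S) * Ring.inverse (1 + S)) := rfl
        _ = J₀ * (((-2:ℝ) • (T * c)) * ((2⁻¹:ℝ) • (1 - T))) := by rw [h1mS, hSinv]
        _ = J₀ * (((-2:ℝ) * 2⁻¹) • ((T * c) * (1 - T))) := by rw [smul_mul_smul_comm]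
        _ = J₀ * ((-1:ℝ) • (T * (c * (1 - T)))) := by norm_num [mul_assoc]
        _ = J₀ * (-T) := by rw [hc2, mul_one, neg_smul, one_smul]
        _ = -((J₀ * J₀) * J) := by rw [hT, mul_neg, mul_assoc]
        _ = J := by rw [hJ₀sq, neg_mul, one_mul, neg_neg]
    exact ⟨hmem, hround⟩
  have hwunit : ∀ S ∈ Sset, IsUnit (1 + S) ∧ IsUnit (1 - S) := by
    intro S hS
    obtain ⟨hsym, hanti, hp, hm⟩ := hS
    constructor
    · refine ccs_isUnit fun v hv => ?_
      have := hp v hv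
      simpa [ContinuousLinearMap.add_apply, ContinuousLinearMap.one_apply] using this
    · refine ccs_isUnit fun v hv => ?_
      have := hm v hv
      simpa [ContinuousLinearMap.sub_apply, ContinuousLinearMap.one_apply] using this
  have hψmem : ∀ S ∈ Sset, ψ S ∈ ccsSet (fun v w => (⟪J₀ v, w⟫ : ℝ)) ∧ φ (ψ S) = S := by
    intro S hS
    obtain ⟨hw, hw'⟩ := hwunit S hS
    obtain ⟨hsym, hanti, hp, hm⟩ := hS
    set c : E →L[ℝ] E := Ring.inverse (1 + S) with hc
    have hc1 : (1 + S) * c = 1 := Ring.mul_inverse_cancel _ hw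
    have hc2 : c * (1 + S) = 1 := Ring.inverse_mul_cancel _ hw
    have hd1 : (1 - S) * Ring.inverse (1 - S) = 1 := Ring.mul_inverse_cancel _ hw'
    have hd2 : Ring.inverse (1 - S) * (1 - S) = 1 := Ring.inverse_mul_cancel _ hw'
    have hc1' : ∀ v, (1 + S) (c v) = v := fun v => ccs_inv_apply_left hw v
    have hcne : ∀ v, v ≠ 0 → c v ≠ 0 := fun v hv h0 => hv (by rw [← hc1' v, h0, map_zero])
    have h1pSsym : ∀ v w, ⟪(1 + S) v, w⟫ = ⟪v, (1 + S) w⟫ := by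
      intro v w
      simp only [ContinuousLinearMap.add_apply, ContinuousLinearMap.one_apply,
        inner_add_left, inner_add_right]
      rw [hsym v w]
    have h1mSsym : ∀ v w, ⟪(1 - S) v, w⟫ = ⟪v, (1 - S) w⟫ := by
      intro v w
      simp only [ContinuousLinearMap.sub_apply, ContinuousLinearMap.one_apply,
        inner_sub_left, inner_sub_right]
      rw [hsym v w]
    have hcsym : ∀ v w, ⟪c v, w⟫ = ⟪v, c w⟫ := fun v w => ccs_inv_symm hw h1pSsym v w
    set T : E →L[ℝ] E := (1 - S) * c with hT
    have hvdec : ∀ v, v = c v + S (c v) := by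
      intro v
      have := hc1' v
      simp only [ContinuousLinearMap.add_apply, ContinuousLinearMap.one_apply] at this
      exact this.symm
    have hTapp : ∀ v, T v = c v - S (c v) := by
      intro v
      simp [hT, ContinuousLinearMap.mul_apply, ContinuousLinearMap.sub_apply,
        ContinuousLinearMap.one_apply]
    have hSJring : S * J₀ = -(J₀ * S) := by
      ext v
      simp only [ContinuousLinearMap.mul_apply, ContinuousLinearMap.neg_apply]
      rw [hanti v]
    have ha : (1 + S) * J₀ = J₀ * (1 - S) := by
      rw [add_mul, one_mul, hSJring, mul_sub, mul_one, ← sub_eq_add_neg]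
    have hb : (1 - S) * J₀ = J₀ * (1 + S) := by
      rw [sub_mul, one_mul, hSJring, mul_add, mul_one, sub_neg_eq_add]
    have hcJd : c * J₀ = J₀ * Ring.inverse (1 - S) := by
      have e1 : c * ((1 + S) * J₀) * Ring.inverse (1 - S) = J₀ * Ring.inverse (1 - S) := by
        calc c * ((1 + S) * J₀) * Ring.inverse (1 - S)
            = (c * (1 + S)) * (J₀ * Ring.inverse (1 - S)) := by simp only [mul_assoc]
          _ = J₀ * Ring.inverse (1 - S) := by rw [hc2, one_mul]
      have e2 : c * (J₀ * (1 - S)) * Ring.inverse (1 - S) = c * J₀ := by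
        calc c * (J₀ * (1 - S)) * Ring.inverse (1 - S)
            = (c * J₀) * ((1 - S) * Ring.inverse (1 - S)) := by simp only [mul_assoc]
          _ = c * J₀ := by rw [hd1, mul_one]
      have e3 := congrArg (fun X => c * X * Ring.inverse (1 - S)) ha
      try simp only at e3
      rw [e1, e2] at e3
      exact e3.symm
    have hTJT : T * (J₀ * T) = J₀ := by
      calc T * (J₀ * T) = (1 - S) * (c * J₀) * T := by simp only [hT, mul_assoc]
        _ = (1 - S) * (J₀ * Ring.inverse (1 - S)) * ((1 - S) * c) := by rw [hcJd, hT]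
        _ = ((1 - S) * J₀) * ((Ring.inverse (1 - S) * (1 - S)) * c) := by
            simp only [mul_assoc]
        _ = ((1 - S) * J₀) * c := by rw [hd2, one_mul]
        _ = J₀ * ((1 + S) * c) := by rw [hb, mul_assoc]
        _ = J₀ := by rw [hc1, mul_one]
    have hJJring : (J₀ * T) * (J₀ * T) = -1 := by
      calc (J₀ * T) * (J₀ * T) = J₀ * (T * (J₀ * T)) := by simp only [mul_assoc]
        _ = J₀ * J₀ := by rw [hTJT]
        _ = -1 := hJ₀sq
    have hT'sym : ∀ v w, ⟪T v, w⟫ = ⟪v, T w⟫ := by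
      intro v w
      have e4 : T w = c ((1 - S) w) := by
        show ((1 - S) * c) w = c ((1 - S) w)
        rw [ccs_comm_inverse hw (by noncomm_ring : (1 - S) * (1 + S) = (1 + S) * (1 - S))]
        rfl
      calc ⟪T v, w⟫ = ⟪(1 - S) (c v), w⟫ := rfl
        _ = ⟪c v, (1 - S) w⟫ := h1mSsym _ _
        _ = ⟪v, c ((1 - S) w)⟫ := hcsym _ _
        _ = ⟪v, T w⟫ := by rw [← e4]
    have hT'pos : ∀ v, v ≠ 0 → 0 < ⟪T v, v⟫ := by
      intro v hv
      have hx := hcne v hv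
      have key := ccs_contract hsym hp hm (c v) hx
      have e5 : ⟪T v, v⟫ = ⟪c v, c v⟫ - ⟪S (c v), S (c v)⟫ := by
        rw [hTapp v]
        nth_rewrite 3 [hvdec v]
        rw [inner_sub_left, inner_add_right, inner_add_right]
        have c1 : ⟪c v, S (c v)⟫ = ⟪S (c v), c v⟫ := real_inner_comm (S (c v)) (c v)
        linarith
      rw [e5]
      linarith
    have hmemJ : ψ S ∈ ccsSet (fun v w => (⟪J₀ v, w⟫ : ℝ)) := by
      refine ⟨fun v => ?_, fun v w => ?_, fun v hv => ?_⟩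
      · have := DFunLike.congr_fun hJJring v
        show (J₀ * T) ((J₀ * T) v) = -v
        simpa [ContinuousLinearMap.mul_apply, ContinuousLinearMap.neg_apply,
          ContinuousLinearMap.one_apply] using this
      · show (⟪J₀ v, (J₀ * T) w⟫ : ℝ) = ⟪J₀ w, (J₀ * T) v⟫
        have e1 : (J₀ * T) w = J₀ (T w) := rfl
        have e2 : (J₀ * T) v = J₀ (T v) := rfl
        rw [e1, e2, hJJinner v (T w), hJJinner w (T v), ← hT'sym v w]
        exact real_inner_comm w (T v)
      · show (0:ℝ) < ⟪J₀ v, (J₀ * T) v⟫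
        have e1 : (J₀ * T) v = J₀ (T v) := rfl
        rw [e1, hJJinner v (T v), real_inner_comm (T v) v]
        exact hT'pos v hv
    have hround : φ (ψ S) = S := by
      have hJ₀T : J₀ * (J₀ * T) = -T := by
        rw [← mul_assoc, hJ₀sq, neg_one_mul]
      have h1pT : (1 : E →L[ℝ] E) + T = (2:ℝ) • c := by
        have e1 : ((1 + S) + (1 - S)) * c = 1 + T := by rw [add_mul, hc1, hT]
        have e2 : (1 + S) + (1 - S) = (2:ℝ) • (1 : E →L[ℝ] E) := by
          rw [two_smul]; abel
        rw [← e1, e2, smul_mul_assoc, one_mul]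
      have h1mT : (1 : E →L[ℝ] E) - T = (2:ℝ) • (S * c) := by
        have e1 : ((1 + S) - (1 - S)) * c = 1 - T := by rw [sub_mul, hc1, hT]
        have e2 : (1 + S) - (1 - S) = (2:ℝ) • S := by
          rw [two_smul]; abel
        rw [← e1, e2, smul_mul_assoc]
      have hTinv : Ring.inverse (1 + T) = (2⁻¹:ℝ) • (1 + S) := by
        apply ccs_ring_inverse_eq
        · rw [h1pT, smul_mul_smul_comm, hc2]
          norm_num
        · rw [h1pT, smul_mul_smul_comm, hc1]
          norm_num
      calc φ (ψ S) = (1 + J₀ * (J₀ * T)) * Ring.inverse (1 - J₀ * (J₀ * T)) := rfl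
        _ = (1 - T) * Ring.inverse (1 + T) := by
            rw [hJ₀T, ← sub_eq_add_neg, sub_neg_eq_add]
        _ = ((2:ℝ) • (S * c)) * ((2⁻¹:ℝ) • (1 + S)) := by rw [h1mT, hTinv]
        _ = ((2:ℝ) * 2⁻¹) • ((S * c) * (1 + S)) := by rw [smul_mul_smul_comm]
        _ = S * (c * (1 + S)) := by norm_num [mul_assoc]
        _ = S := by rw [hc2, mul_one]
    exact ⟨hmemJ, hround⟩
  have hφcont : ∀ J ∈ ccsSet (fun v w => (⟪J₀ v, w⟫ : ℝ)), ContinuousAt φ J := by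
    intro J hJ
    have h1 : Continuous fun X : E →L[ℝ] E => 1 + J₀ * X :=
      continuous_const.add (continuous_const.mul continuous_id)
    have h2 : Continuous fun X : E →L[ℝ] E => 1 - J₀ * X :=
      continuous_const.sub (continuous_const.mul continuous_id)
    have hu := hunit J hJ
    have h3 : ContinuousAt Ring.inverse (1 - J₀ * J) := by
      have := NormedRing.inverse_continuousAt hu.unit
      rwa [IsUnit.unit_spec] at this
    have h4 : ContinuousAt (fun X : E →L[ℝ] E => Ring.inverse (1 - J₀ * X)) J :=
      Filter.Tendsto.comp h3 h2.continuousAt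
    exact (h1.continuousAt).mul h4
  have hψcont : ∀ S ∈ Sset, ContinuousAt ψ S := by
    intro S hS
    have h1 : Continuous fun X : E →L[ℝ] E => 1 - X := continuous_const.sub continuous_id
    have h2 : Continuous fun X : E →L[ℝ] E => 1 + X := continuous_const.add continuous_id
    have hw := (hwunit S hS).1
    have h3 : ContinuousAt Ring.inverse (1 + S) := by
      have := NormedRing.inverse_continuousAt hw.unit
      rwa [IsUnit.unit_spec] at this
    have h4 : ContinuousAt (fun X : E →L[ℝ] E => Ring.inverse (1 + X)) S :=
      Filter.Tendsto.comp h3 h2.continuousAt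
    exact continuousAt_const.mul ((h1.continuousAt).mul h4)
  have hcont1 : Continuous fun J : (ccsSet fun v w => (⟪J₀ v, w⟫ : ℝ)) =>
      (⟨φ J.1, (hφmem J.1 J.2).1⟩ : Sset) :=
    Continuous.subtype_mk
      (continuousOn_iff_continuous_restrict.mp
        (fun J hJ => (hφcont J hJ).continuousWithinAt)) _
  have hcont2 : Continuous fun S : Sset =>
      (⟨ψ S.1, (hψmem S.1 S.2).1⟩ : (ccsSet fun v w => (⟪J₀ v, w⟫ : ℝ))) :=
    Continuous.subtype_mk
      (continuousOn_iff_continuous_restrict.mp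
        (fun S hS => (hψcont S hS).continuousWithinAt)) _
  let H : (ccsSet fun v w => (⟪J₀ v, w⟫ : ℝ)) ≃ₜ Sset :=
    { toFun := fun J => ⟨φ J.1, (hφmem J.1 J.2).1⟩
      invFun := fun S => ⟨ψ S.1, (hψmem S.1 S.2).1⟩
      left_inv := fun J => Subtype.ext (hφmem J.1 J.2).2
      right_inv := fun S => Subtype.ext (hψmem S.1 S.2).2
      continuous_toFun := hcont1
      continuous_invFun := hcont2 }
  haveI : ContractibleSpace Sset := hconv.contractibleSpace ⟨0, hSne⟩
  exact ⟨⟨J₀, hJ₀mem⟩, H.contractibleSpace⟩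

lemma ccs_transport {V W : Type*} [NormedAddCommGroup V] [NormedSpace ℝ V]
    [NormedAddCommGroup W] [NormedSpace ℝ W]
    (e : V ≃L[ℝ] W) (Ω : V → V → ℝ) (Ω' : W → W → ℝ)
    (hΩ : ∀ x y, Ω' x y = Ω (e.symm x) (e.symm y)) :
    Nonempty (ccsSet Ω ≃ₜ ccsSet Ω') := by
  classical
  have hmem : ∀ J ∈ ccsSet Ω,
      ((e : V →L[ℝ] W).comp (J.comp (e.symm : W →L[ℝ] V))) ∈ ccsSet Ω' := by
    intro J hJ
    obtain ⟨h1, h2, h3⟩ := hJ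
    refine ⟨fun x => ?_, fun x y => ?_, fun x hx => ?_⟩
    · simp only [ContinuousLinearMap.comp_apply, ContinuousLinearEquiv.coe_coe,
        ContinuousLinearEquiv.symm_apply_apply]
      rw [h1, map_neg, ContinuousLinearEquiv.apply_symm_apply]
    · simp only [ContinuousLinearMap.comp_apply, ContinuousLinearEquiv.coe_coe]
      rw [hΩ, hΩ, ContinuousLinearEquiv.symm_apply_apply,
        ContinuousLinearEquiv.symm_apply_apply]
      exact h2 (e.symm x) (e.symm y)
    · simp only [ContinuousLinearMap.comp_apply, ContinuousLinearEquiv.coe_coe]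
      rw [hΩ, ContinuousLinearEquiv.symm_apply_apply]
      refine h3 (e.symm x) fun h0 => hx ?_
      have := congrArg e h0
      rwa [ContinuousLinearEquiv.apply_symm_apply, map_zero] at this
  have hmem' : ∀ K ∈ ccsSet Ω',
      ((e.symm : W →L[ℝ] V).comp (K.comp (e : V →L[ℝ] W))) ∈ ccsSet Ω := by
    intro K hK
    obtain ⟨h1, h2, h3⟩ := hK
    refine ⟨fun x => ?_, fun x y => ?_, fun x hx => ?_⟩
    · simp only [ContinuousLinearMap.comp_apply, ContinuousLinearEquiv.coe_coe,
        ContinuousLinearEquiv.apply_symm_apply]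
      rw [h1, map_neg, ContinuousLinearEquiv.symm_apply_apply]
    · simp only [ContinuousLinearMap.comp_apply, ContinuousLinearEquiv.coe_coe]
      have := h2 (e x) (e y)
      rw [hΩ, hΩ, ContinuousLinearEquiv.symm_apply_apply,
        ContinuousLinearEquiv.symm_apply_apply] at this
      exact this
    · simp only [ContinuousLinearMap.comp_apply, ContinuousLinearEquiv.coe_coe]
      have := h3 (e x) fun h0 => hx (by
        have := congrArg e.symm h0
        rwa [ContinuousLinearEquiv.symm_apply_apply, map_zero] at this)
      rw [hΩ, ContinuousLinearEquiv.symm_apply_apply] at this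
      exact this
  refine ⟨{
    toFun := fun J => ⟨(e : V →L[ℝ] W).comp ((J : V →L[ℝ] V).comp (e.symm : W →L[ℝ] V)),
      hmem J.1 J.2⟩
    invFun := fun K => ⟨(e.symm : W →L[ℝ] V).comp ((K : W →L[ℝ] W).comp (e : V →L[ℝ] W)),
      hmem' K.1 K.2⟩
    left_inv := fun J => Subtype.ext (by
      ext v
      simp [ContinuousLinearMap.comp_apply])
    right_inv := fun K => Subtype.ext (by
      ext v
      simp [ContinuousLinearMap.comp_apply])
    continuous_toFun := Continuous.subtype_mk
      ((continuous_const.clm_comp (continuous_subtype_val.clm_comp continuous_const))) _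
    continuous_invFun := Continuous.subtype_mk
      ((continuous_const.clm_comp (continuous_subtype_val.clm_comp continuous_const))) _ }⟩

lemma ccs_basis_ext {n : ℕ} (b : OrthonormalBasis (Fin n) ℝ E) {f g : E →L[ℝ] E}
    (h : ∀ i, f (b i) = g (b i)) : f = g := by
  apply ContinuousLinearMap.coe_injective
  exact b.toBasis.ext (by simpa using h)

set_option synthInstance.maxHeartbeats 1000000 in
lemma ccs_exists (Ω : E →ₗ[ℝ] E →ₗ[ℝ] ℝ) (halt : ∀ v, Ω v v = 0)
    (hnd : ∀ v, (∀ w, Ω v w = 0) → v = 0) :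
    ∃ (J₀ Wc : E →L[ℝ] E), Function.Bijective Wc ∧
      (∀ v, J₀ (J₀ v) = -v) ∧ (∀ v, ⟪J₀ v, v⟫ = 0) ∧
      (∀ x y, Ω (Wc x) (Wc y) = ⟪J₀ x, y⟫) := by
  classical
  -- antisymmetry
  have hanti : ∀ v w, Ω v w = -Ω w v := by
    intro v w
    have h2 := halt (v + w)
    simp only [map_add, LinearMap.add_apply, halt] at h2
    have h3 := halt v
    have h4 := halt w
    linarith
  -- the operator A with ⟪A v, w⟫ = Ω v w
  let A' : E →ₗ[ℝ] E :=
    { toFun := fun v => (InnerProductSpace.toDual ℝ E).symm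
        (LinearMap.toContinuousLinearMap (Ω v))
      map_add' := by
        intro v w
        simp [map_add]
      map_smul' := by
        intro m v
        simp [map_smul] }
  set A : E →L[ℝ] E := LinearMap.toContinuousLinearMap A' with hAdef
  have hA : ∀ v w, ⟪A v, w⟫ = Ω v w := by
    intro v w
    show ⟪(InnerProductSpace.toDual ℝ E).symm (LinearMap.toContinuousLinearMap (Ω v)), w⟫
      = Ω v w
    rw [InnerProductSpace.toDual_symm_apply]
    rfl
  have hAskew : ∀ v w, ⟪A v, w⟫ = -⟪v, A w⟫ := by
    intro v w
    rw [hA v w, hanti v w, ← hA w v, real_inner_comm (A w) v]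
  have hAinj : Function.Injective A := by
    rw [injective_iff_map_eq_zero]
    intro v hv
    refine hnd v fun w => ?_
    rw [← hA v w, hv, inner_zero_left]
  set P : E →L[ℝ] E := -(A * A) with hPdef
  have hPapp : ∀ v, P v = -(A (A v)) := fun v => rfl
  have hPinner : ∀ v w, ⟪P v, w⟫ = ⟪A v, A w⟫ := by
    intro v w
    rw [hPapp, inner_neg_left]
    have := hAskew (A v) w
    linarith
  have hPsym : (P : E →ₗ[ℝ] E).IsSymmetric := by
    intro x y
    show ⟪P x, y⟫ = ⟪x, P y⟫
    rw [hPinner x y, real_inner_comm (P y) x, hPinner y x]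
    exact real_inner_comm (A y) (A x)
  set n := Module.finrank ℝ E with hn
  have hfr : Module.finrank ℝ E = n := rfl
  set b := hPsym.eigenvectorBasis hfr with hb
  set μ := hPsym.eigenvalues hfr with hμ
  have hPb : ∀ i, P (b i) = μ i • b i := by
    intro i
    have h := hPsym.apply_eigenvectorBasis hfr i
    have h2 : (P : E →ₗ[ℝ] E) (b i) = μ i • b i := by exact_mod_cast h
    exact h2
  have hbnorm : ∀ i, ⟪b i, b i⟫ = (1:ℝ) := by
    intro i
    have h1 := b.orthonormal.1 i
    rw [real_inner_self_eq_norm_mul_norm, h1, one_mul]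
  have hbne : ∀ i, b i ≠ 0 := fun i => b.orthonormal.ne_zero i
  have hμpos : ∀ i, 0 < μ i := by
    intro i
    have h1 : ⟪P (b i), b i⟫ = μ i := by
      rw [hPb i, real_inner_smul_left, hbnorm i, mul_one]
    have h2 : (0:ℝ) < ⟪A (b i), A (b i)⟫ :=
      ccs_self_pos fun h0 => hbne i (hAinj (by rw [h0, map_zero]))
    rw [hPinner] at h1
    linarith
  -- the fourth-root interpolation polynomial
  set d : Fin n → ℝ := fun i => (Real.sqrt (Real.sqrt (μ i)))⁻¹ with hd
  have hdpos : ∀ i, 0 < d i := by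
    intro i
    have := Real.sqrt_pos.mpr (Real.sqrt_pos.mpr (hμpos i))
    positivity
  set nodes : Finset ℝ := Finset.image μ Finset.univ with hnodes
  set q : ℝ[X] := Lagrange.interpolate nodes id
    (fun t => (Real.sqrt (Real.sqrt t))⁻¹) with hq
  have hqeval : ∀ i, q.eval (μ i) = d i := by
    intro i
    have hmem : μ i ∈ nodes := Finset.mem_image_of_mem μ (Finset.mem_univ i)
    have := Lagrange.eval_interpolate_at_node (fun t => (Real.sqrt (Real.sqrt t))⁻¹)
      (Set.injOn_id _) hmem
    simpa [hq, hd] using this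
  set Wc : E →L[ℝ] E := Polynomial.aeval P q with hWc
  have hWb : ∀ i, Wc (b i) = d i • b i := by
    intro i
    rw [hWc, ccs_aeval_eig P q (b i) (μ i) (hPb i), hqeval i]
  have hWsym : ∀ v w, ⟪Wc v, w⟫ = ⟪v, Wc w⟫ := ccs_diag_symm b Wc d hWb
  have hWpos : ∀ v, v ≠ 0 → 0 < ⟪Wc v, v⟫ := ccs_diag_pos b Wc d hWb hdpos
  have hWinj : Function.Injective Wc := by
    rw [injective_iff_map_eq_zero]
    intro v hv
    by_contra hv0
    have := hWpos v hv0
    rw [hv] at this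
    simp at this
  have hWbij : Function.Bijective Wc :=
    ⟨hWinj, (LinearMap.injective_iff_surjective (f := (Wc : E →ₗ[ℝ] E))).mp hWinj⟩
  have hAP : Commute A P := by
    have h1 : Commute A (A * A) := (Commute.refl A).mul_right (Commute.refl A)
    simpa [hPdef] using h1.neg_right
  have hAW : Commute A Wc := ccs_commute_aeval A P hAP q
  have hAWapp : ∀ v, A (Wc v) = Wc (A v) := by
    intro v
    have := DFunLike.congr_fun hAW.eq v
    simpa [ContinuousLinearMap.mul_apply] using this
  set Q : E →L[ℝ] E := Wc * Wc with hQ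
  have hQapp : ∀ v, Q v = Wc (Wc v) := fun v => rfl
  have hQb : ∀ i, Q (b i) = (Real.sqrt (μ i))⁻¹ • b i := by
    intro i
    rw [hQapp, hWb i, map_smul, hWb i, smul_smul, hd]
    congr 1
    rw [← mul_inv]
    congr 1
    exact Real.mul_self_sqrt (Real.sqrt_nonneg (μ i))
  set J₀ : E →L[ℝ] E := A * Q with hJ₀def
  have hAQ : Commute A Q := hAW.mul_right hAW
  have hPQQ : P * (Q * Q) = 1 := by
    apply ccs_basis_ext b
    intro i
    have e1 : (Q * Q) (b i) = ((Real.sqrt (μ i))⁻¹ * (Real.sqrt (μ i))⁻¹) • b i := by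
      show Q (Q (b i)) = _
      rw [hQb i, map_smul, hQb i, smul_smul]
    have e2 : (Real.sqrt (μ i))⁻¹ * (Real.sqrt (μ i))⁻¹ = (μ i)⁻¹ := by
      rw [← mul_inv]
      congr 1
      exact Real.mul_self_sqrt (le_of_lt (hμpos i))
    show P ((Q * Q) (b i)) = (1 : E →L[ℝ] E) (b i)
    rw [e1, e2, map_smul, hPb i, smul_smul, inv_mul_cancel₀ (ne_of_gt (hμpos i))]
    simp
  have hJ₀sqring : J₀ * J₀ = -1 := by
    have e1 : J₀ * J₀ = (A * A) * (Q * Q) := by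
      calc (A * Q) * (A * Q) = A * ((Q * A) * Q) := by simp only [mul_assoc]
        _ = A * ((A * Q) * Q) := by rw [← hAQ.eq]
        _ = (A * A) * (Q * Q) := by simp only [mul_assoc]
    have e2 : (A * A) * (Q * Q) = -(P * (Q * Q)) := by
      rw [hPdef, neg_mul, neg_neg]
    rw [hJ₀def, e1, e2, hPQQ]
  have hJ₀ : ∀ v, J₀ (J₀ v) = -v := by
    intro v
    have := DFunLike.congr_fun hJ₀sqring v
    simpa [ContinuousLinearMap.mul_apply, ContinuousLinearMap.neg_apply,
      ContinuousLinearMap.one_apply] using this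
  have hmain : ∀ x y, Ω (Wc x) (Wc y) = ⟪J₀ x, y⟫ := by
    intro x y
    have hQsym : ∀ v w, ⟪Q v, w⟫ = ⟪v, Q w⟫ := by
      intro v w
      rw [hQapp, hWsym (Wc v) w, hWsym v (Wc w)]
      rfl
    calc Ω (Wc x) (Wc y) = ⟪A (Wc x), Wc y⟫ := (hA _ _).symm
      _ = ⟪Wc (A x), Wc y⟫ := by rw [hAWapp]
      _ = ⟪A x, Wc (Wc y)⟫ := hWsym _ _
      _ = ⟪A x, Q y⟫ := by rw [← hQapp]
      _ = ⟪Q (A x), y⟫ := by rw [← hQsym (A x) y]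
      _ = ⟪A (Q x), y⟫ := by
          have : Q (A x) = A (Q x) := by
            have := DFunLike.congr_fun hAQ.eq x
            simpa [ContinuousLinearMap.mul_apply] using this.symm
          rw [this]
      _ = ⟪J₀ x, y⟫ := rfl
  have halt' : ∀ v, ⟪J₀ v, v⟫ = 0 := by
    intro v
    rw [← hmain v v]
    exact halt (Wc v)
  exact ⟨J₀, Wc, hWbij, hJ₀, halt', hmain⟩

end

/-- **Existence and contractibility of compatible complex structures on a symplectic
vector space.**  Let `V` be a finite-dimensional real vector space and `ω` a
nondegenerate alternating bilinear form on `V`.  The space `𝒥(V,ω)` of linear complex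
structures `J` on `V` such that `g_J(v,w) := ω(v, Jw)` is symmetric and positive
definite, as a subspace of the space of (continuous) linear endomorphisms of `V`,
is nonempty and contractible. -/
theorem compatible_complex_structures_nonempty_contractible
    (V : Type*) [NormedAddCommGroup V] [NormedSpace ℝ V] [FiniteDimensional ℝ V]
    (ω : V →ₗ[ℝ] V →ₗ[ℝ] ℝ)
    (halt : ∀ v, ω v v = 0)
    (hnondeg : ∀ v, (∀ w, ω v w = 0) → v = 0) :
    ({J : V →L[ℝ] V | (∀ v, J (J v) = -v) ∧ (∀ v w, ω v (J w) = ω w (J v)) ∧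
        (∀ v, v ≠ 0 → 0 < ω v (J v))}).Nonempty ∧
      ContractibleSpace {J : V →L[ℝ] V | (∀ v, J (J v) = -v) ∧
        (∀ v w, ω v (J w) = ω w (J v)) ∧ (∀ v, v ≠ 0 → 0 < ω v (J v))} := by
  classical
  let Eu := EuclideanSpace ℝ (Fin (Module.finrank ℝ V))
  let e₀ : V ≃L[ℝ] Eu := toEuclidean
  let Ω : Eu →ₗ[ℝ] Eu →ₗ[ℝ] ℝ :=
    LinearMap.compl₁₂ ω (e₀.symm.toLinearEquiv.toLinearMap) (e₀.symm.toLinearEquiv.toLinearMap)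
  have hΩ : ∀ x y, Ω x y = ω (e₀.symm x) (e₀.symm y) := fun x y => rfl
  have haltΩ : ∀ x, Ω x x = 0 := fun x => halt _
  have hndΩ : ∀ x, (∀ y, Ω x y = 0) → x = 0 := by
    intro x hx
    have h1 : e₀.symm x = 0 := by
      refine hnondeg _ fun w => ?_
      have := hx (e₀ w)
      rwa [hΩ, ContinuousLinearEquiv.symm_apply_apply] at this
    have := congrArg e₀ h1
    rwa [ContinuousLinearEquiv.apply_symm_apply, map_zero] at this
  obtain ⟨J₀, Wc, hWbij, hJ₀, halt', hmain⟩ := ccs_exists Ω haltΩ hndΩ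
  let eW : Eu ≃L[ℝ] Eu :=
    (LinearEquiv.ofBijective (Wc : Eu →ₗ[ℝ] Eu) hWbij).toContinuousLinearEquiv
  have hWeW : ∀ y, eW y = Wc y := fun y => rfl
  let e : V ≃L[ℝ] Eu := e₀.trans eW.symm
  have he : ∀ x, e.symm x = e₀.symm (Wc x) := by
    intro x
    apply e.injective
    rw [e.apply_symm_apply]
    show x = eW.symm (e₀ (e₀.symm (Wc x)))
    rw [e₀.apply_symm_apply, ← hWeW x, eW.symm_apply_apply]
  have hΩ' : ∀ x y : Eu, (fun a b => (⟪J₀ a, b⟫ : ℝ)) x y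
      = (fun (a b : V) => (ω a b : ℝ)) (e.symm x) (e.symm y) := by
    intro x y
    simp only
    rw [he x, he y, ← hΩ (Wc x) (Wc y), hmain x y]
  obtain ⟨H⟩ := ccs_transport e (fun (a b : V) => (ω a b : ℝ))
    (fun a b => (⟪J₀ a, b⟫ : ℝ)) hΩ'
  obtain ⟨hne, hcontr⟩ := ccs_main J₀ hJ₀ halt'
  show (ccsSet fun (a b : V) => (ω a b : ℝ)).Nonempty ∧
    ContractibleSpace (ccsSet fun (a b : V) => (ω a b : ℝ))
  constructor
  · obtain ⟨K, hK⟩ := hne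
    exact ⟨(H.symm ⟨K, hK⟩).1, (H.symm ⟨K, hK⟩).2⟩
  · haveI := hcontr
    exact H.contractibleSpace
end

section
/- For any nonzero vectors v, w ∈ ℂⁿ ≅ ℝ^{2n}, there exists a real-linear map Y : ℂⁿ → ℂⁿ which is symmetric with respect to the standard real inner product ⟨a,b⟩ = Re Σ_{j=1}^n conj(a_j)·b_j (i.e. ⟨Ya, b⟩ = ⟨a, Yb⟩ for all a, b ∈ ℂⁿ), anticommutes with multiplication by i (i.e. Y(i·x) = −i·Y(x) for all x ∈ ℂⁿ), and satisfies Yv = w. -/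
open Complex

/-- For any nonzero `v, w ∈ ℂⁿ ≅ ℝ^{2n}` there is a real-linear map `Y : ℂⁿ → ℂⁿ` which
is symmetric for the standard real inner ℂ product `⟨a,b⟩ = Re Σⱼ conj(aⱼ)·bⱼ`,
anticommutes with multiplication by `i`, and satisfies `Yv = w`. -/
theorem exists_symmetric_antilinear_map_sending (n : ℕ)
    (v w : EuclideanSpace ℂ (Fin n)) (hv : v ≠ 0) (hw : w ≠ 0) :
    ∃ Y : EuclideanSpace ℂ (Fin n) →ₗ[ℝ] EuclideanSpace ℂ (Fin n),
      (∀ a b : EuclideanSpace ℂ (Fin n),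
        (inner ℂ (Y a) b : ℂ).re = (inner ℂ a (Y b) : ℂ).re) ∧
      (∀ x : EuclideanSpace ℂ (Fin n), Y (Complex.I • x) = -(Complex.I • Y x)) ∧
      Y v = w := by
  set c : ℂ := (((‖v‖ : ℝ)^2 : ℝ) : ℂ)⁻¹ with hc
  have hvn : (‖v‖ : ℝ) ≠ 0 := norm_ne_zero_iff.2 hv
  have hcc : (starRingEnd ℂ) c = c := by
    simp [hc]
  set f : EuclideanSpace ℂ (Fin n) → EuclideanSpace ℂ (Fin n) := fun x =>
      (c * inner ℂ x v) • w + (c * inner ℂ x w - inner ℂ v w * c^2 * inner ℂ x v) • v with hf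
  have hadd : ∀ x y, f (x + y) = f x + f y := by
    intro x y
    simp only [hf, inner_add_left]
    module
  have hsmul : ∀ (r : ℝ) (x), f (r • x) = r • f x := by
    intro r x
    simp only [hf]
    rw [← algebraMap_smul ℂ r x]
    simp only [inner_smul_left, Complex.coe_algebraMap, Complex.conj_ofReal,
      algebraMap_smul]
    match_scalars <;> simp [Complex.coe_algebraMap] <;> ring
  have key : ∀ a b, (inner ℂ (f a) b : ℂ) = inner ℂ (f b) a := by
    intro a b
    simp only [hf, inner_add_left, inner_smul_left, map_mul, map_sub, map_pow,
      inner_conj_symm, hcc]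
    ring
  refine ⟨⟨⟨f, fun x y => hadd x y⟩, fun r x => hsmul r x⟩, ?_, ?_, ?_⟩
  · intro a b
    show (inner ℂ (f a) b : ℂ).re = (inner ℂ a (f b) : ℂ).re
    rw [key a b, ← inner_conj_symm a (f b)]
    simp only [Complex.conj_re]
  · intro x
    show f (Complex.I • x) = -(Complex.I • f x)
    simp only [hf, inner_smul_left, Complex.conj_I]
    module
  · show f v = w
    have h1 : (inner ℂ v v : ℂ) = ((‖v‖^2 : ℝ) : ℂ) := by
      rw [inner_self_eq_norm_sq_to_K]; norm_num
    have hc0 : (((‖v‖:ℝ)^2 : ℝ) : ℂ) ≠ 0 := by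
      simpa using pow_ne_zero 2 hvn
    simp only [hf, h1]
    have e1 : c * ((‖v‖^2 : ℝ) : ℂ) = 1 := inv_mul_cancel₀ hc0
    have e2 : c * inner ℂ v w - inner ℂ v w * c^2 * ((‖v‖^2:ℝ):ℂ) = 0 := by
      have h3 : (inner ℂ v w : ℂ) * c ^ 2 * ((‖v‖^2:ℝ):ℂ)
          = inner ℂ v w * c * (c * ((‖v‖^2:ℝ):ℂ)) := by ring
      rw [h3, e1]; ring
    rw [e1, e2]
    simp
end
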